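/- Consider an r × c cylinder graph with r, c ≥ 2. Any Hamiltonian path starting at (0,0), ending in the last column, and using at most (c − 1) + 2m horizontal edges must end at a vertex (x, c−1) with x ∈ A_{r,c,m} = {(c + 2m − 2i) mod r : 0 ≤ i ≤ c + 2m}. -/

import Mathlib

/-- The `r × c` cylinder graph: vertices `(i, j)` with row `i : ZMod r` and column
`j : Fin c`; vertical edges `(i,j)–(i+1 mod r, j)` and horizontal edges `(i,j)–(i,j+1)`. -/
def cylGraph (r c : ℕ) : SimpleGraph (ZMod r × Fin c) :=
  SimpleGraph.fromRel (fun u v =>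
    (u.2 = v.2 ∧ v.1 = u.1 + 1) ∨ (u.1 = v.1 ∧ (v.2 : ℕ) = (u.2 : ℕ) + 1))

namespace Stmt16

open SimpleGraph

variable {r c : ℕ}

def stepZ (d : (cylGraph r c).Dart) : ℤ :=
  if d.toProd.2.1 = d.toProd.1.1 + 1 then 1
  else if d.toProd.1.1 = d.toProd.2.1 + 1 then -1 else 0

lemma adj_elim {u v : ZMod r × Fin c} (h : (cylGraph r c).Adj u v) :
    (u.2 = v.2 ∧ (v.1 = u.1 + 1 ∨ u.1 = v.1 + 1)) ∨
    (u.1 = v.1 ∧ ((v.2 : ℕ) = (u.2 : ℕ) + 1 ∨ (u.2 : ℕ) = (v.2 : ℕ) + 1)) := by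
  rw [cylGraph, SimpleGraph.fromRel_adj] at h
  obtain ⟨-, h | h⟩ := h
  · rcases h with ⟨h1, h2⟩ | ⟨h1, h2⟩
    · exact Or.inl ⟨h1, Or.inl h2⟩
    · exact Or.inr ⟨h1, Or.inl h2⟩
  · rcases h with ⟨h1, h2⟩ | ⟨h1, h2⟩
    · exact Or.inl ⟨h1.symm, Or.inr h2⟩
    · exact Or.inr ⟨h1.symm, Or.inr h2⟩

lemma dart_cases (hr : 2 ≤ r) (d : (cylGraph r c).Dart) :
    (stepZ d = 1 ∧ d.toProd.2.1 = d.toProd.1.1 + 1 ∧ d.toProd.1.2 = d.toProd.2.2) ∨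
    (stepZ d = -1 ∧ d.toProd.1.1 = d.toProd.2.1 + 1 ∧ d.toProd.1.2 = d.toProd.2.2) ∨
    (stepZ d = 0 ∧ d.toProd.1.1 = d.toProd.2.1 ∧
      ((d.toProd.2.2 : ℕ) = (d.toProd.1.2 : ℕ) + 1 ∨
        (d.toProd.1.2 : ℕ) = (d.toProd.2.2 : ℕ) + 1)) := by
  haveI : Fact (1 < r) := ⟨by omega⟩
  rcases adj_elim d.adj with ⟨hcol, hrow | hrow⟩ | ⟨hrow, hcol⟩
  · exact Or.inl ⟨by simp [stepZ, hrow], hrow, hcol⟩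
  · by_cases h1 : d.toProd.2.1 = d.toProd.1.1 + 1
    · exact Or.inl ⟨by simp [stepZ, h1], h1, hcol⟩
    · exact Or.inr (Or.inl ⟨by rw [stepZ, if_neg h1, if_pos hrow], hrow, hcol⟩)
  · have h1 : ¬ (d.toProd.2.1 = d.toProd.1.1 + 1) := by
      rw [← hrow]; intro h; simp at h
    have h2 : ¬ (d.toProd.1.1 = d.toProd.2.1 + 1) := by
      rw [hrow]; intro h; simp at h
    exact Or.inr (Or.inr ⟨by rw [stepZ, if_neg h1, if_neg h2], hrow, hcol⟩)

lemma stepZ_eq_zero_iff (hr : 2 ≤ r) (d : (cylGraph r c).Dart) :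
    stepZ d = 0 ↔ d.toProd.1.1 = d.toProd.2.1 := by
  haveI : Fact (1 < r) := ⟨by omega⟩
  rcases dart_cases hr d with ⟨h0, h1, h2⟩ | ⟨h0, h1, h2⟩ | ⟨h0, h1, h2⟩
  · rw [h0]; constructor
    · intro h; norm_num at h
    · intro h; rw [← h] at h1; simp at h1
  · rw [h0]; constructor
    · intro h; norm_num at h
    · intro h; rw [h] at h1; simp at h1
  · simp [h0, h1]

lemma rowstep (hr : 2 ≤ r) (d : (cylGraph r c).Dart) :
    d.toProd.2.1 = d.toProd.1.1 + (stepZ d : ZMod r) := by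
  rcases dart_cases hr d with ⟨h0, h1, h2⟩ | ⟨h0, h1, h2⟩ | ⟨h0, h1, h2⟩ <;> rw [h0] <;> push_cast
  · exact h1
  · rw [h1]; ring
  · rw [h1]; ring

/-- `Phi r h₀ v = ⌈(v - h₀)/r⌉`. -/
def Phi (r h₀ : ℕ) (v : ℤ) : ℤ := -((h₀ - v) / r)

lemma I1 {r : ℕ} (hr : 0 < r) (a : ℤ) :
    a / r - (a - 1) / r = if a % r = 0 then 1 else 0 := by
  have hr' : (0:ℤ) < r := by exact_mod_cast hr
  have h := Int.mul_ediv_add_emod (a - 1) r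
  have h2 := Int.emod_nonneg (a - 1) (by omega : (r:ℤ) ≠ 0)
  have h3 := Int.emod_lt_of_pos (a - 1) hr'
  set q := (a - 1) / (r:ℤ) with hq
  set ρ := (a - 1) % (r:ℤ) with hρ
  by_cases hc : ρ = r - 1
  · have ha : a = (r:ℤ) * (q + 1) := by linear_combination hc - h
    have hdiv : a / r = q + 1 := by rw [ha, Int.mul_ediv_cancel_left _ (by omega : (r:ℤ) ≠ 0)]
    have hmod : a % r = 0 := by rw [ha]; exact Int.mul_emod_right _ _
    rw [hdiv, hmod, if_pos rfl]; ring
  · have ha : a = ρ + 1 + q * r := by linear_combination -h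
    have hdiv : a / r = q := by
      rw [ha, Int.add_mul_ediv_right _ _ (by omega : (r:ℤ) ≠ 0),
        Int.ediv_eq_zero_of_lt (by omega) (by omega), zero_add]
    have hmod : a % r = ρ + 1 := by
      rw [ha, Int.add_mul_emod_self_right, Int.emod_eq_of_lt (by omega) (by omega)]
    rw [hdiv, hmod, if_neg (by omega)]; ring

lemma Phi_up {r : ℕ} (hr : 0 < r) (h₀ : ℕ) (z : ℤ) :
    Phi r h₀ (z + 1) - Phi r h₀ z = if (z - h₀) % r = 0 then 1 else 0 := by
  have := I1 hr ((h₀ : ℤ) - z)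
  have hmod : ((h₀ : ℤ) - z) % r = 0 ↔ (z - h₀) % r = 0 := by
    constructor <;> intro h
    · exact Int.emod_eq_zero_of_dvd
        (by simpa [neg_sub] using (dvd_neg.mpr (Int.dvd_of_emod_eq_zero h)))
    · exact Int.emod_eq_zero_of_dvd
        (by simpa [neg_sub] using (dvd_neg.mpr (Int.dvd_of_emod_eq_zero h)))
  have heq : (h₀ : ℤ) - (z + 1) = ((h₀ : ℤ) - z) - 1 := by ring
  rw [Phi, Phi, heq]
  split_ifs with hcond
  · rw [if_pos (hmod.mpr hcond)] at this
    linarith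
  · rw [if_neg (fun hh => hcond (hmod.mp hh))] at this
    linarith

lemma Phi_final {r : ℕ} (hr : 0 < r) (h₀ : ℕ) (hh : h₀ < r) (Z : ℤ) :
    Phi r h₀ Z - Phi r h₀ 0 = Z / r + (if (h₀ : ℤ) < Z % r then 1 else 0) := by
  have hr' : (0:ℤ) < r := by exact_mod_cast hr
  have h := Int.mul_ediv_add_emod Z r
  have h2 := Int.emod_nonneg Z (by omega : (r:ℤ) ≠ 0)
  have h3 := Int.emod_lt_of_pos Z hr'
  set S := Z / (r:ℤ)
  set ρ := Z % (r:ℤ)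
  have hphi0 : Phi r h₀ 0 = 0 := by
    rw [Phi, Int.ediv_eq_zero_of_lt (by omega) (by omega)]; ring
  rw [hphi0, sub_zero, Phi]
  by_cases hc : (h₀ : ℤ) < ρ
  · have : (h₀ : ℤ) - Z = (h₀ - ρ + r) + (-(S + 1)) * r := by linear_combination h
    rw [this, Int.add_mul_ediv_right _ _ (by omega : (r:ℤ) ≠ 0),
      Int.ediv_eq_zero_of_lt (by omega) (by omega), if_pos hc]
    ring
  · have : (h₀ : ℤ) - Z = (h₀ - ρ) + (-S) * r := by linear_combination h
    rw [this, Int.add_mul_ediv_right _ _ (by omega : (r:ℤ) ≠ 0),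
      Int.ediv_eq_zero_of_lt (by omega) (by omega), if_neg hc]
    ring

/-- generic telescoping over darts -/
lemma darts_telescope {V : Type*} {G : SimpleGraph V} {M : Type*} [AddCommGroup M] (f : V → M)
    {u v : V} (p : G.Walk u v) :
    (p.darts.map (fun d => f d.toProd.2 - f d.toProd.1)).sum = f v - f u := by
  induction p with
  | nil => simp
  | cons h p ih => simp only [SimpleGraph.Walk.darts_cons, List.map_cons, List.sum_cons, ih]; abel

lemma sum_countP {α : Type*} (n : ℕ) (f : ℕ → α → Bool) (q : α → Bool) (l : List α)
    (hpt : ∀ a : α, ((Finset.range n).filter (fun h => f h a = true)).card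
      = if q a then 1 else 0) :
    (∑ h ∈ Finset.range n, l.countP (f h)) = l.countP q := by
  induction l with
  | nil => simp
  | cons a l ih =>
    simp only [List.countP_cons]
    rw [Finset.sum_add_distrib, ih]
    congr 1
    rw [← hpt a, Finset.card_filter]

def predUp (h₀ : ℕ) (d : (cylGraph r c).Dart) : Bool :=
  decide (stepZ d = 1 ∧ d.toProd.1.1 = (h₀ : ZMod r))

def predDown (h₀ : ℕ) (d : (cylGraph r c).Dart) : Bool :=
  decide (stepZ d = -1 ∧ d.toProd.2.1 = (h₀ : ZMod r))

lemma cast_eq_cast_iff (hr : 2 ≤ r) (a : ℤ) (h₀ : ℕ) :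
    ((a : ZMod r) = (h₀ : ZMod r)) ↔ (a - h₀) % r = 0 := by
  haveI : NeZero r := ⟨by omega⟩
  rw [← sub_eq_zero, show ((h₀ : ZMod r)) = (((h₀ : ℤ)) : ZMod r) by push_cast; rfl,
    ← Int.cast_sub, ZMod.intCast_zmod_eq_zero_iff_dvd]
  exact ⟨Int.emod_eq_zero_of_dvd, Int.dvd_of_emod_eq_zero⟩

lemma netc_walk (hr : 2 ≤ r) (h₀ : ℕ) {u v : ZMod r × Fin c} (p : (cylGraph r c).Walk u v) :
    ∀ z : ℤ, (z : ZMod r) = u.1 →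
    (p.darts.countP (predUp h₀) : ℤ) - (p.darts.countP (predDown h₀) : ℤ)
      = Phi r h₀ (z + (p.darts.map stepZ).sum) - Phi r h₀ z := by
  have hr0 : 0 < r := by omega
  induction p with
  | nil => intro z hz; simp
  | @cons a b w h p ih =>
    intro z hz
    set d : (cylGraph r c).Dart := ⟨(a, b), h⟩ with hd
    have hz' : ((z + stepZ d : ℤ) : ZMod r) = b.1 := by
      push_cast
      rw [hz]
      exact (rowstep hr d).symm
    have key : ((if predUp h₀ d then 1 else 0 : ℕ) : ℤ)
        - ((if predDown h₀ d then 1 else 0 : ℕ) : ℤ)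
        = Phi r h₀ (z + stepZ d) - Phi r h₀ z := by
      rcases dart_cases hr d with ⟨h0, h1, h2⟩ | ⟨h0, h1, h2⟩ | ⟨h0, h1, h2⟩
      · have hpd : predDown h₀ d = false := by simp [predDown, h0]
        have hiff : (d.toProd.1.1 = (h₀ : ZMod r)) ↔ (z - h₀) % r = 0 := by
          rw [← hz]; exact cast_eq_cast_iff hr z h₀
        rw [h0, Phi_up hr0]
        by_cases hcase : (z - h₀) % r = 0
        · rw [if_pos hcase, hpd]
          have : predUp h₀ d = true := by
            simp only [predUp, decide_eq_true_eq]; exact ⟨h0, hiff.mpr hcase⟩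
          rw [this]; simp
        · rw [if_neg hcase, hpd]
          have : predUp h₀ d = false := by
            simp only [predUp, decide_eq_false_iff_not]; rintro ⟨-, hq⟩
            exact hcase (hiff.mp hq)
          rw [this]; simp
      · have hpu : predUp h₀ d = false := by simp [predUp, h0]
        have hd2 : d.toProd.2.1 = ((z - 1 : ℤ) : ZMod r) := by
          push_cast; rw [hz]
          have : d.toProd.1.1 = d.toProd.2.1 + 1 := h1
          rw [this]; ring
        have hiff : (d.toProd.2.1 = (h₀ : ZMod r)) ↔ ((z - 1) - h₀) % r = 0 := by
          rw [hd2]; exact cast_eq_cast_iff hr (z - 1) h₀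
        have hPhi := Phi_up hr0 h₀ (z - 1)
        rw [show (z - 1) + 1 = z by ring] at hPhi
        rw [h0]
        rw [show z + (-1 : ℤ) = z - 1 by ring]
        by_cases hcase : ((z - 1) - h₀) % r = 0
        · rw [if_pos hcase] at hPhi
          have : predDown h₀ d = true := by
            simp only [predDown, decide_eq_true_eq]; exact ⟨h0, hiff.mpr hcase⟩
          rw [this, hpu]; simp; linarith
        · rw [if_neg hcase] at hPhi
          have : predDown h₀ d = false := by
            simp only [predDown, decide_eq_false_iff_not]; rintro ⟨-, hq⟩
            exact hcase (hiff.mp hq)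
          rw [this, hpu]; simp; linarith
      · have hpu : predUp h₀ d = false := by simp [predUp, h0]
        have hpd : predDown h₀ d = false := by simp [predDown, h0]
        rw [h0, hpu, hpd]; simp
    have := ih (z + stepZ d) hz'
    rw [SimpleGraph.Walk.darts_cons, List.countP_cons, List.countP_cons, List.map_cons,
      List.sum_cons]
    push_cast
    push_cast at this key
    rw [show z + (stepZ d + (p.darts.map stepZ).sum) = (z + stepZ d) + (p.darts.map stepZ).sum
      by ring]
    linarith


def qCross (h₀ : ℕ) (d : (cylGraph r c).Dart) : Bool := predUp h₀ d || predDown h₀ d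

lemma countP_or (h₀ : ℕ) (l : List ((cylGraph r c).Dart)) :
    l.countP (qCross h₀) = l.countP (predUp h₀) + l.countP (predDown h₀) := by
  induction l with
  | nil => simp
  | cons d l ih =>
    simp only [List.countP_cons, ih]
    have : ¬ (predUp h₀ d = true ∧ predDown h₀ d = true) := by
      rintro ⟨hu, hd⟩
      simp only [predUp, predDown, decide_eq_true_eq] at hu hd
      omega
    by_cases hu : predUp h₀ d = true <;> by_cases hv : predDown h₀ d = true
    · exact absurd ⟨hu, hv⟩ this
    · rw [if_pos (by simp [qCross, hu] : qCross h₀ d = true), if_pos hu,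
        if_neg hv]
      omega
    · rw [if_pos (by simp [qCross, hv] : qCross h₀ d = true), if_neg hu,
        if_pos hv]
      omega
    · rw [if_neg (by simp [qCross, Bool.not_eq_true] at hu hv ⊢; exact ⟨hu, hv⟩ :
        ¬ qCross h₀ d = true), if_neg hu, if_neg hv]
      omega

lemma edge_of_cross (hr : 2 ≤ r) (h₀ : ℕ) (d : (cylGraph r c).Dart)
    (hd : qCross h₀ d = true) :
    d.edge = s(((h₀ : ZMod r), d.toProd.1.2), ((h₀ : ZMod r) + 1, d.toProd.1.2)) := by
  have hdef : d.edge = s(d.toProd.1, d.toProd.2) := rfl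
  simp only [qCross, Bool.or_eq_true, predUp, predDown, decide_eq_true_eq] at hd
  rcases hd with ⟨hs, hq⟩ | ⟨hs, hq⟩
  · rcases dart_cases hr d with ⟨-, h1, h2⟩ | ⟨h0', -, -⟩ | ⟨h0', -, -⟩
    · have e1 : d.toProd.1 = ((h₀ : ZMod r), d.toProd.1.2) := Prod.ext_iff.mpr ⟨hq, rfl⟩
      have e2 : d.toProd.2 = ((h₀ : ZMod r) + 1, d.toProd.1.2) :=
        Prod.ext_iff.mpr ⟨by rw [h1, hq], h2.symm⟩
      rw [hdef, e1, e2]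
    · omega
    · omega
  · rcases dart_cases hr d with ⟨h0', -, -⟩ | ⟨-, h1, h2⟩ | ⟨h0', -, -⟩
    · omega
    · have e1 : d.toProd.1 = ((h₀ : ZMod r) + 1, d.toProd.1.2) :=
        Prod.ext_iff.mpr ⟨by rw [h1, hq], rfl⟩
      have e2 : d.toProd.2 = ((h₀ : ZMod r), d.toProd.1.2) := Prod.ext_iff.mpr ⟨hq, h2.symm⟩
      rw [hdef, e1, e2]
      exact Sym2.eq_swap
    · omega

lemma cut_bound (hr : 2 ≤ r) {u v : ZMod r × Fin c} (p : (cylGraph r c).Walk u v)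
    (hp : p.IsPath) (h₀ : ℕ) :
    p.darts.countP (qCross h₀) ≤ c := by
  classical
  have hedges : (p.darts.map SimpleGraph.Dart.edge).Nodup := hp.isTrail.edges_nodup
  have hnd : p.darts.Nodup := List.Nodup.of_map _ hedges
  set l := p.darts.filter (qCross h₀) with hl
  have hlnd : l.Nodup := hnd.filter _
  have hinj : ∀ x ∈ l, ∀ y ∈ l, x.toProd.1.2 = y.toProd.1.2 → x = y := by
    intro x hx y hy hxy
    refine List.inj_on_of_nodup_map hedges (List.mem_of_mem_filter hx)
      (List.mem_of_mem_filter hy) ?_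
    rw [edge_of_cross hr h₀ x (List.of_mem_filter hx),
      edge_of_cross hr h₀ y (List.of_mem_filter hy), hxy]
  have hmnd : (l.map (fun d => d.toProd.1.2)).Nodup := List.Nodup.map_on hinj hlnd
  calc p.darts.countP (qCross h₀) = l.length := by rw [hl, List.countP_eq_length_filter]
    _ = (l.map (fun d => d.toProd.1.2)).length := (List.length_map _).symm
    _ ≤ Fintype.card (Fin c) := hmnd.length_le_card
    _ = c := Fintype.card_fin c

lemma card_filter_up (hr : 2 ≤ r) (d : (cylGraph r c).Dart) :
    ((Finset.range r).filter (fun h => predUp h d = true)).card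
      = if (fun d => decide (stepZ d = 1)) d = true then 1 else 0 := by
  haveI : NeZero r := ⟨by omega⟩
  by_cases h1 : stepZ d = 1
  · rw [if_pos (by simp [h1])]
    rw [Finset.card_eq_one]
    refine ⟨(d.toProd.1.1).val, ?_⟩
    ext h
    simp only [Finset.mem_filter, Finset.mem_range, Finset.mem_singleton, predUp,
      decide_eq_true_eq]
    constructor
    · rintro ⟨hlt, -, heq⟩
      rw [heq, ZMod.val_cast_of_lt hlt]
    · rintro rfl
      exact ⟨ZMod.val_lt _, h1, (ZMod.natCast_rightInverse _).symm⟩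
  · rw [if_neg (by simp [h1])]
    rw [Finset.card_eq_zero]
    ext h
    simp only [Finset.mem_filter, predUp, decide_eq_true_eq, Finset.notMem_empty, iff_false]
    rintro ⟨-, hs, -⟩
    exact h1 hs

lemma card_filter_down (hr : 2 ≤ r) (d : (cylGraph r c).Dart) :
    ((Finset.range r).filter (fun h => predDown h d = true)).card
      = if (fun d => decide (stepZ d = -1)) d = true then 1 else 0 := by
  haveI : NeZero r := ⟨by omega⟩
  by_cases h1 : stepZ d = -1
  · rw [if_pos (by simp [h1])]
    rw [Finset.card_eq_one]
    refine ⟨(d.toProd.2.1).val, ?_⟩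
    ext h
    simp only [Finset.mem_filter, Finset.mem_range, Finset.mem_singleton, predDown,
      decide_eq_true_eq]
    constructor
    · rintro ⟨hlt, -, heq⟩
      rw [heq, ZMod.val_cast_of_lt hlt]
    · rintro rfl
      exact ⟨ZMod.val_lt _, h1, (ZMod.natCast_rightInverse _).symm⟩
  · rw [if_neg (by simp [h1])]
    rw [Finset.card_eq_zero]
    ext h
    simp only [Finset.mem_filter, predDown, decide_eq_true_eq, Finset.notMem_empty, iff_false]
    rintro ⟨-, hs, -⟩
    exact h1 hs

lemma countP_pm (hr : 2 ≤ r) (l : List ((cylGraph r c).Dart)) :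
    l.countP (fun d => decide (stepZ d = 1)) + l.countP (fun d => decide (stepZ d = -1))
      = l.countP (fun d => decide (stepZ d ≠ 0)) := by
  induction l with
  | nil => simp
  | cons d l ih =>
    simp only [List.countP_cons]
    rw [← ih]
    rcases dart_cases hr d with ⟨h0, -, -⟩ | ⟨h0, -, -⟩ | ⟨h0, -, -⟩ <;> rw [h0] <;>
      norm_num <;> omega


lemma col_parity (hr : 2 ≤ r) (l : List ((cylGraph r c).Dart)) :
    ((l.map (fun d => ((d.toProd.2.2 : ℕ) : ℤ) - ((d.toProd.1.2 : ℕ) : ℤ))).sum) % 2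
      = (l.countP (fun d => decide (d.toProd.1.1 = d.toProd.2.1)) : ℤ) % 2 := by
  induction l with
  | nil => simp
  | cons d l ih =>
    rw [List.map_cons, List.sum_cons, List.countP_cons]
    rcases dart_cases hr d with ⟨h0, h1, h2⟩ | ⟨h0, h1, h2⟩ | ⟨h0, h1, h2⟩
    · have hne : ¬ (d.toProd.1.1 = d.toProd.2.1) := by
        intro h; rw [← (stepZ_eq_zero_iff hr d)] at h; omega
      rw [if_neg (by simpa using hne), h2]
      push_cast
      omega
    · have hne : ¬ (d.toProd.1.1 = d.toProd.2.1) := by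
        intro h; rw [← (stepZ_eq_zero_iff hr d)] at h; omega
      rw [if_neg (by simpa using hne), h2]
      push_cast
      omega
    · rw [if_pos (by simpa using h1)]
      push_cast
      omega

end Stmt16

/-- Any Hamiltonian path in the `r × c` cylinder graph (`r, c ≥ 2`) starting at `(0,0)`,
ending in the last column, and using at most `(c−1) + 2m` horizontal edges must end at a
row in `A_{r,c,m} = {(c + 2m − 2i) mod r : 0 ≤ i ≤ c + 2m}`. -/
theorem stmt_16 (r c m : ℕ) (hr : 2 ≤ r) (hc : 2 ≤ c) (x : ZMod r)
    (w : (cylGraph r c).Walk (0, ⟨0, by omega⟩) (x, ⟨c - 1, by omega⟩))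
    (hw : w.IsHamiltonian)
    (hcost : w.darts.countP (fun d => decide (d.toProd.1.1 = d.toProd.2.1)) ≤ (c - 1) + 2 * m) :
    ∃ i : ℕ, i ≤ c + 2 * m ∧ x = (((c : ℤ) + 2 * m - 2 * i : ℤ) : ZMod r) := by
  classical
  haveI : NeZero r := ⟨by omega⟩
  have hr0 : 0 < r := by omega
  have hr0' : (0:ℤ) < r := by exact_mod_cast hr0
  open Stmt16 in
  -- horizontal and vertical dart counts
  set H : ℕ := w.darts.countP (fun d => decide (d.toProd.1.1 = d.toProd.2.1)) with hHdef
  set V : ℕ := w.darts.countP (fun d => decide (Stmt16.stepZ d ≠ 0)) with hVdef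
  have hlen : w.darts.length = r * c - 1 := by
    rw [SimpleGraph.Walk.length_darts, hw.length_eq]
    congr 1
    rw [Fintype.card_prod, ZMod.card, Fintype.card_fin]
  have hVH : H + V = r * c - 1 := by
    rw [hHdef, hVdef, ← hlen, List.length_eq_countP_add_countP
      (fun d => decide (d.toProd.1.1 = d.toProd.2.1))]
    congr 1
    apply List.countP_congr
    intro d _
    simp only [Bool.not_eq_true', decide_eq_false_iff_not, decide_eq_true_eq]
    rw [← Stmt16.stepZ_eq_zero_iff hr d]
  have hrc4 : 4 ≤ r * c := by nlinarith
  -- the lifted total displacement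
  set Z : ℤ := (w.darts.map Stmt16.stepZ).sum with hZdef
  have hxZ : ((Z : ℤ) : ZMod r) = x := by
    have ht := Stmt16.darts_telescope (fun a : ZMod r × Fin c => a.1) w
    have hcast : ((Z : ℤ) : ZMod r) = (w.darts.map
        (fun d => ((Stmt16.stepZ d : ℤ) : ZMod r))).sum := by
      rw [hZdef, Int.cast_list_sum, List.map_map]
      rfl
    have hmap : w.darts.map (fun d => ((Stmt16.stepZ d : ℤ) : ZMod r))
        = w.darts.map (fun d => (d.toProd.2.1 - d.toProd.1.1)) := by
      apply List.map_congr_left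
      intro d _
      rw [Stmt16.rowstep hr d]
      ring
    rw [hcast, hmap, ht]
    simp
  -- column telescoping: parity of H
  have hcolsum : (w.darts.map
      (fun d => ((d.toProd.2.2 : ℕ) : ℤ) - ((d.toProd.1.2 : ℕ) : ℤ))).sum = (c:ℤ) - 1 := by
    have := Stmt16.darts_telescope (fun a : ZMod r × Fin c => ((a.2 : ℕ) : ℤ)) w
    rw [this]
    push_cast
    omega
  have hparH : ((c:ℤ) - 1) % 2 = (H:ℤ) % 2 := by
    rw [← hcolsum, Stmt16.col_parity hr]
  -- cut crossing counts
  set cru : ℕ → ℕ := fun h₀ => w.darts.countP (Stmt16.predUp h₀) with hcru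
  set crd : ℕ → ℕ := fun h₀ => w.darts.countP (Stmt16.predDown h₀) with hcrd
  set S : ℤ := Z / r with hS
  set ρ : ℤ := Z % r with hρ
  have hρ0 : 0 ≤ ρ := Int.emod_nonneg Z (by omega)
  have hρr : ρ < r := Int.emod_lt_of_pos Z hr0'
  have hZSρ : (r:ℤ) * S + ρ = Z := Int.mul_ediv_add_emod Z r
  have F1 : ∀ h₀ ∈ Finset.range r,
      (cru h₀ : ℤ) - (crd h₀ : ℤ) = S + (if (h₀:ℤ) < ρ then 1 else 0) := by
    intro h₀ hmem
    rw [Finset.mem_range] at hmem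
    have := Stmt16.netc_walk hr h₀ w 0 (by norm_num)
    rw [zero_add, ← hZdef] at this
    rw [hcru, hcrd]
    rw [this, Stmt16.Phi_final hr0 h₀ hmem Z]
  have F2 : ∀ h₀ : ℕ, cru h₀ + crd h₀ ≤ c := by
    intro h₀
    rw [hcru, hcrd, ← Stmt16.countP_or]
    exact Stmt16.cut_bound hr w hw.isPath h₀
  have F3 : (∑ h₀ ∈ Finset.range r, (cru h₀ + crd h₀)) = V := by
    rw [Finset.sum_add_distrib]
    rw [hcru, hcrd, hVdef]
    rw [Stmt16.sum_countP r _ _ _ (fun d => Stmt16.card_filter_up hr d),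
      Stmt16.sum_countP r _ _ _ (fun d => Stmt16.card_filter_down hr d)]
    exact Stmt16.countP_pm hr w.darts
  -- sum of signed crossings equals Z
  have hcard_lt : ((Finset.range r).filter (fun h : ℕ => (h:ℤ) < ρ)).card = ρ.toNat := by
    have : (Finset.range r).filter (fun h : ℕ => (h:ℤ) < ρ) = Finset.range ρ.toNat := by
      ext a
      simp only [Finset.mem_filter, Finset.mem_range]
      omega
    rw [this, Finset.card_range]
  have G1 : (∑ h₀ ∈ Finset.range r, ((cru h₀ : ℤ) - (crd h₀ : ℤ))) = (r:ℤ) * S + ρ := by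
    rw [Finset.sum_congr rfl F1, Finset.sum_add_distrib, Finset.sum_const, Finset.card_range,
      Finset.sum_boole, hcard_lt]
    push_cast [nsmul_eq_mul]
    omega
  have G2 : (V:ℤ) % 2 = ((r:ℤ) * S + ρ) % 2 := by
    have e1 : (V:ℤ) = ∑ h₀ ∈ Finset.range r, ((cru h₀ : ℤ) + (crd h₀ : ℤ)) := by
      rw [← F3]
      push_cast
      rfl
    have e2 : (∑ h₀ ∈ Finset.range r, ((cru h₀ : ℤ) + (crd h₀ : ℤ)))
        - (∑ h₀ ∈ Finset.range r, ((cru h₀ : ℤ) - (crd h₀ : ℤ)))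
        = 2 * (∑ h₀ ∈ Finset.range r, (crd h₀ : ℤ)) := by
      rw [← Finset.sum_sub_distrib, Finset.mul_sum]
      exact Finset.sum_congr rfl (by intros; ring)
    omega
  -- total sum of (c - crossings)
  have Gtot : (∑ h₀ ∈ Finset.range r, ((c:ℤ) - ((cru h₀ : ℤ) + (crd h₀ : ℤ))))
      = (r:ℤ) * c - V := by
    rw [Finset.sum_sub_distrib, Finset.sum_const, Finset.card_range]
    have e1 : (V:ℤ) = ∑ h₀ ∈ Finset.range r, ((cru h₀ : ℤ) + (crd h₀ : ℤ)) := by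
      rw [← F3]; push_cast; rfl
    rw [← e1]
    push_cast [nsmul_eq_mul]
    ring
  have hVHZ : (H:ℤ) + V = (r:ℤ) * c - 1 := by
    have h1 : (H:ℤ) + (V:ℤ) = ((H + V : ℕ) : ℤ) := by push_cast; ring
    rw [h1, hVH, Nat.cast_sub (by omega : 1 ≤ r * c)]
    push_cast
    ring
  have hcostZ : (H:ℤ) ≤ (c:ℤ) - 1 + 2 * m := by
    have h1 : (H:ℤ) ≤ ((c - 1 + 2 * m : ℕ) : ℤ) := by exact_mod_cast hcost
    have h2 : ((c - 1 + 2 * m : ℕ) : ℤ) = (c:ℤ) - 1 + 2 * m := by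
      push_cast [Nat.cast_sub (by omega : 1 ≤ c)]
      ring
    omega
  -- case on parity of c - S
  rcases Int.even_or_odd ((c:ℤ) - S) with ⟨k, hk⟩ | ⟨k, hk⟩
  · -- target residue ρ
    set B := (Finset.range r).filter (fun h : ℕ => (h:ℤ) < ρ) with hB
    have hkey : ∀ h₀ ∈ B, 1 ≤ (c:ℤ) - ((cru h₀ : ℤ) + (crd h₀ : ℤ)) := by
      intro h₀ hmem
      rw [hB] at hmem
      simp only [Finset.mem_filter] at hmem
      have e1 := F1 h₀ hmem.1
      rw [if_pos hmem.2] at e1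
      have e2 := F2 h₀
      have e2' : (cru h₀ : ℤ) + (crd h₀ : ℤ) ≤ c := by exact_mod_cast e2
      omega
    have hchain : (ρ : ℤ) ≤ (r:ℤ) * c - V := by
      have h1 : (B.card : ℤ) ≤ ∑ h₀ ∈ B, ((c:ℤ) - ((cru h₀ : ℤ) + (crd h₀ : ℤ))) := by
        calc (B.card : ℤ) = ∑ _h₀ ∈ B, (1:ℤ) := by rw [Finset.sum_const]; push_cast; ring
          _ ≤ _ := Finset.sum_le_sum hkey
      have h2 : (∑ h₀ ∈ B, ((c:ℤ) - ((cru h₀ : ℤ) + (crd h₀ : ℤ))))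
          ≤ ∑ h₀ ∈ Finset.range r, ((c:ℤ) - ((cru h₀ : ℤ) + (crd h₀ : ℤ))) := by
        apply Finset.sum_le_sum_of_subset_of_nonneg (Finset.filter_subset _ _)
        intro i hi _
        have := F2 i
        have : (cru i : ℤ) + (crd i : ℤ) ≤ c := by exact_mod_cast this
        omega
      have hBcard : B.card = ρ.toNat := by rw [hB]; exact hcard_lt
      rw [hBcard] at h1
      rw [Gtot] at h2
      omega
    have hprod : (r:ℤ) * c - (r:ℤ) * S = 2 * ((r:ℤ) * k) := by linear_combination (r:ℤ) * hk
    set RC : ℤ := (r:ℤ) * c with hRC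
    set RS : ℤ := (r:ℤ) * S with hRS
    set RK : ℤ := (r:ℤ) * k with hRK
    have hpar : ((c:ℤ) + 2*m - ρ) % 2 = 0 := by omega
    have hle : ρ ≤ (c:ℤ) + 2*m := by omega
    refine ⟨(((c:ℤ) + 2*m - ρ)/2).toNat, by omega, ?_⟩
    have hval : (c:ℤ) + 2*m - 2 * ((((c:ℤ) + 2*m - ρ)/2).toNat : ℤ) = ρ := by omega
    rw [← hxZ]
    rw [hval]
    have : ((Z : ℤ) : ZMod r) = ((ρ : ℤ) : ZMod r) := by
      have : Z = (r:ℤ) * S + ρ := hZSρ.symm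
      rw [this]
      push_cast
      simp [ZMod.natCast_self]
    rw [this]
  · -- target residue ρ - r
    set B := (Finset.range r).filter (fun h : ℕ => ¬ ((h:ℤ) < ρ)) with hB
    have hcardB : B.card = r - ρ.toNat := by
      have hBI : B = Finset.Ico ρ.toNat r := by
        rw [hB]
        ext a
        simp only [Finset.mem_filter, Finset.mem_range, Finset.mem_Ico]
        omega
      rw [hBI, Nat.card_Ico]
    have hkey : ∀ h₀ ∈ B, 1 ≤ (c:ℤ) - ((cru h₀ : ℤ) + (crd h₀ : ℤ)) := by
      intro h₀ hmem
      rw [hB] at hmem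
      simp only [Finset.mem_filter] at hmem
      have e1 := F1 h₀ hmem.1
      rw [if_neg hmem.2] at e1
      have e2 := F2 h₀
      have e2' : (cru h₀ : ℤ) + (crd h₀ : ℤ) ≤ c := by exact_mod_cast e2
      omega
    have hchain : (r:ℤ) - ρ ≤ (r:ℤ) * c - V := by
      have h1 : (B.card : ℤ) ≤ ∑ h₀ ∈ B, ((c:ℤ) - ((cru h₀ : ℤ) + (crd h₀ : ℤ))) := by
        calc (B.card : ℤ) = ∑ _h₀ ∈ B, (1:ℤ) := by rw [Finset.sum_const]; push_cast; ring
          _ ≤ _ := Finset.sum_le_sum hkey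
      have h2 : (∑ h₀ ∈ B, ((c:ℤ) - ((cru h₀ : ℤ) + (crd h₀ : ℤ))))
          ≤ ∑ h₀ ∈ Finset.range r, ((c:ℤ) - ((cru h₀ : ℤ) + (crd h₀ : ℤ))) := by
        apply Finset.sum_le_sum_of_subset_of_nonneg (Finset.filter_subset _ _)
        intro i hi _
        have := F2 i
        have : (cru i : ℤ) + (crd i : ℤ) ≤ c := by exact_mod_cast this
        omega
      rw [hcardB] at h1
      rw [Gtot] at h2
      omega
    have hprod : (r:ℤ) * c - (r:ℤ) * S = 2 * ((r:ℤ) * k) + r := by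
      linear_combination (r:ℤ) * hk
    set RC : ℤ := (r:ℤ) * c with hRC
    set RS : ℤ := (r:ℤ) * S with hRS
    set RK : ℤ := (r:ℤ) * k with hRK
    have hpar : ((c:ℤ) + 2*m - (ρ - r)) % 2 = 0 := by omega
    have hge : -((c:ℤ) + 2*m) ≤ ρ - r := by omega
    have hle : ρ - r ≤ (c:ℤ) + 2*m := by omega
    refine ⟨(((c:ℤ) + 2*m - (ρ - r))/2).toNat, by omega, ?_⟩
    have hval : (c:ℤ) + 2*m - 2 * ((((c:ℤ) + 2*m - (ρ - r))/2).toNat : ℤ) = ρ - r := by omega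
    rw [← hxZ]
    rw [hval]
    have : ((Z : ℤ) : ZMod r) = ((ρ - r : ℤ) : ZMod r) := by
      have hZ' : Z = (r:ℤ) * (S + 1) + (ρ - r) := by linear_combination -hZSρ
      rw [hZ']
      push_cast
      simp [ZMod.natCast_self]
    rw [this]
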